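/- For any finite poset P, the number of k-dimensional simplex faces of the chain polytope C(P) containing the origin is at most the number of k-dimensional simplex faces of the order polytope O(P) containing the origin, for every k ≥ 0. -/

import Mathlib

open Set

variable {E : Type*} [AddCommGroup E] [Module ℝ E]

/-- A polytope: the convex hull of a finite set of points. -/
def IsPolytope (P : Set E) : Prop := ∃ S : Finset E, P = convexHull ℝ (S : Set E)

open Classical in
/-- Dimension of a polytope: `-1` for the empty set, else the dimension of its affine span. -/
noncomputable def polyDim (P : Set E) : ℤ :=
  if P = ∅ then -1 else (Module.finrank ℝ (vectorSpan ℝ P) : ℤ)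

/-- Number of vertices (extreme points). -/
noncomputable def vertexCount (P : Set E) : ℕ := (P.extremePoints ℝ).ncard

/-- A simplex: a polytope with `dim + 1` vertices (the empty set counts as a simplex). -/
def IsSimplex (P : Set E) : Prop :=
  IsPolytope P ∧ (vertexCount P : ℤ) = polyDim P + 1

/-- Faces of a polytope are its extreme subsets. -/
def IsFaceOf (F P : Set E) : Prop := IsExtreme ℝ P F

/-- Number of `k`-dimensional simplex faces of `P`. -/
noncomputable def simpCount (P : Set E) (k : ℤ) : ℕ :=
  {F : Set E | IsFaceOf F P ∧ IsSimplex F ∧ polyDim F = k}.ncard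

/-- Number of `k`-dimensional simplex faces of `P` containing the origin. -/
noncomputable def simpCount0 (P : Set E) (k : ℤ) : ℕ :=
  {F : Set E | IsFaceOf F P ∧ IsSimplex F ∧ polyDim F = k ∧ (0 : E) ∈ F}.ncard

/-- Number of `k`-dimensional simplex faces of `P` not containing the origin. -/
noncomputable def simpCount1 (P : Set E) (k : ℤ) : ℕ :=
  {F : Set E | IsFaceOf F P ∧ IsSimplex F ∧ polyDim F = k ∧ (0 : E) ∉ F}.ncard

/-- The order polytope of a poset. -/
def orderPolytope (α : Type*) [PartialOrder α] : Set (α → ℝ) :=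
  {x | (∀ p, 0 ≤ x p ∧ x p ≤ 1) ∧ ∀ p q : α, p ≤ q → x p ≤ x q}

/-- The chain polytope of a poset. -/
def chainPolytope (α : Type*) [PartialOrder α] : Set (α → ℝ) :=
  {x | (∀ p, 0 ≤ x p) ∧ ∀ s : Finset α, IsChain (· ≤ ·) (s : Set α) → ∑ p ∈ s, x p ≤ 1}

open Classical in
/-- Characteristic vector of a subset. -/
noncomputable def chi {α : Type*} (S : Set α) : α → ℝ := fun p => if p ∈ S then 1 else 0

/-! ### Auxiliary material for the proof -/

section Aux
set_option linter.unusedSectionVars false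

variable {α : Type*} [Fintype α] [PartialOrder α]

/-- The 0/1 cube condition. -/
def zeroOneVec (x : α → ℝ) : Prop := ∀ p, x p = 0 ∨ x p = 1

lemma orderPolytope_convex : Convex ℝ (orderPolytope α) := by
  intro x hx y hy a b ha hb hab
  constructor
  · intro p
    have h1 := (hx.1 p).1; have h2 := (hx.1 p).2; have h3 := (hy.1 p).1; have h4 := (hy.1 p).2
    constructor
    · have : (a • x + b • y) p = a * x p + b * y p := rfl
      rw [this]; nlinarith
    · have : (a • x + b • y) p = a * x p + b * y p := rfl
      rw [this]; nlinarith
  · intro p q hpq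
    have h1 := hx.2 p q hpq; have h2 := hy.2 p q hpq
    have e1 : (a • x + b • y) p = a * x p + b * y p := rfl
    have e2 : (a • x + b • y) q = a * x q + b * y q := rfl
    rw [e1, e2]; nlinarith

lemma zero_mem_orderPolytope : (0 : α → ℝ) ∈ orderPolytope α := by
  refine ⟨fun p => ⟨le_refl _, by norm_num⟩, fun p q _ => le_refl _⟩

lemma zero_mem_chainPolytope : (0 : α → ℝ) ∈ chainPolytope α := by
  refine ⟨fun p => le_refl _, fun s _ => ?_⟩
  simp

lemma chainPolytope_coord_le_one {x : α → ℝ} (hx : x ∈ chainPolytope α) (p : α) : x p ≤ 1 := by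
  have := hx.2 {p} (by simp [IsChain.singleton])
  simpa using this

lemma chi_zeroOne (S : Set α) : zeroOneVec (chi S) := by
  intro p; unfold chi; split <;> simp

lemma chi_mem_chainPolytope {A : Set α} (hA : ∀ a ∈ A, ∀ b ∈ A, a ≤ b → a = b) :
    chi A ∈ chainPolytope α := by
  classical
  constructor
  · intro p; unfold chi; split <;> norm_num
  · intro s hs
    have : ∑ p ∈ s, chi A p = (s.filter (fun p => p ∈ A)).card := by
      rw [Finset.card_filter]
      push_cast
      rw [Finset.sum_congr rfl]
      intro p hp; unfold chi; split <;> simp_all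
    rw [this]
    have hcard : (s.filter (fun p => p ∈ A)).card ≤ 1 := by
      apply Finset.card_le_one.2
      intro a ha b hb
      simp only [Finset.mem_filter] at ha hb
      rcases hs.total (by exact_mod_cast ha.1) (by exact_mod_cast hb.1) with h | h
      · exact hA a ha.2 b hb.2 h
      · exact (hA b hb.2 a ha.2 h).symm
    exact_mod_cast hcard

/-- 0/1 vectors in a subset of the cube are extreme points. -/
lemma mem_extremePoints_of_zeroOne {F : Set (α → ℝ)}
    (hsub : ∀ x ∈ F, ∀ p, 0 ≤ x p ∧ x p ≤ 1) {v : α → ℝ} (hv : zeroOneVec v) (hvF : v ∈ F) :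
    v ∈ F.extremePoints ℝ := by
  refine ⟨hvF, ?_⟩
  rintro x hx y hy ⟨a, b, ha, hb, hab, habv⟩
  have key : ∀ p, x p = v p ∧ y p = v p := by
    intro p
    have h1 := (hsub x hx p).1; have h2 := (hsub x hx p).2
    have h3 := (hsub y hy p).1; have h4 := (hsub y hy p).2
    have he : a * x p + b * y p = v p := congrFun habv p
    rcases hv p with h | h <;> rw [h] at he ⊢ <;> constructor <;> nlinarith
  exact funext fun p => (key p).1

open Classical in
/-- The support of a face. -/
noncomputable def suppSet (F : Set (α → ℝ)) : Finset α :=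
  Finset.univ.filter fun p => ∃ x ∈ F, x p ≠ 0

/-- A face of the chain polytope containing `0` is cut out by its support. -/
lemma eq_suppFace {F : Set (α → ℝ)} (hF : IsExtreme ℝ (chainPolytope α) F)
    (hconv : Convex ℝ F) (h0 : (0 : α → ℝ) ∈ F) :
    F = {x ∈ chainPolytope α | ∀ p, p ∉ suppSet F → x p = 0} := by
  classical
  apply Subset.antisymm
  · intro x hxF
    refine ⟨hF.1 hxF, fun p hp => ?_⟩
    by_contra hne
    apply hp
    simp only [suppSet, Finset.mem_filter, Finset.mem_univ, true_and]
    exact ⟨x, hxF, hne⟩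
  · rintro x ⟨hxC, hxQ⟩
    set Q := suppSet F with hQdef
    rcases Q.eq_empty_or_nonempty with hQe | hQne
    · have : x = 0 := by
        funext p; exact hxQ p (by simp [hQe])
      rw [this]; exact h0
    have hw : ∀ p ∈ Q, ∃ y ∈ F, y p ≠ 0 := by
      intro p hp
      simpa only [hQdef, suppSet, Finset.mem_filter, Finset.mem_univ, true_and] using hp
    choose yy hyyF hyyne using hw
    set n : ℝ := (Q.card : ℝ) with hn
    have hnpos : 0 < n := by
      simp only [hn]; exact_mod_cast Finset.card_pos.2 hQne
    set y : α → ℝ := ∑ q ∈ Q.attach, (n⁻¹ : ℝ) • yy q.1 q.2 with hy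
    have hyF : y ∈ F := by
      rw [hy]
      apply hconv.sum_mem
      · intro i _; positivity
      · rw [Finset.sum_const, Finset.card_attach]
        rw [nsmul_eq_mul, ← hn]
        field_simp
      · intro i _; exact hyyF _ _
    have hynn : ∀ r, 0 ≤ y r := fun r => (hF.1 hyF).1 r
    have hypos : ∀ p ∈ Q, 0 < y p := by
      intro p hp
      have : y p = ∑ q ∈ Q.attach, n⁻¹ * yy q.1 q.2 p := by
        rw [hy]; rw [Finset.sum_apply]; rfl
      rw [this]
      have hterm : 0 < n⁻¹ * yy p hp p := by
        have h1 : 0 ≤ yy p hp p := (hF.1 (hyyF p hp)).1 p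
        have h2 : yy p hp p ≠ 0 := hyyne p hp
        have : 0 < yy p hp p := lt_of_le_of_ne h1 (Ne.symm h2)
        positivity
      apply lt_of_lt_of_le hterm
      apply Finset.single_le_sum (f := fun q : {x // x ∈ Q} => n⁻¹ * yy q.1 q.2 p)
        (fun i _ => by
          have := (hF.1 (hyyF i.1 i.2)).1 p
          positivity)
        (Finset.mem_attach _ ⟨p, hp⟩)
    set z : α → ℝ := (1/2 : ℝ) • y with hz
    have hzF : z ∈ F := by
      have := hconv h0 hyF (by norm_num : (0:ℝ) ≤ 1/2) (by norm_num : (0:ℝ) ≤ 1/2) (by norm_num)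
      simpa [hz] using this
    have hzpos : ∀ p ∈ Q, 0 < z p := fun p hp => by
      have : z p = (1/2) * y p := rfl
      rw [this]; have := hypos p hp; linarith
    set ε : ℝ := min (1/2) (Q.inf' hQne fun p => z p / (x p + 1)) with hε
    have hε0 : 0 < ε := by
      apply lt_min (by norm_num)
      rw [Finset.lt_inf'_iff]
      intro p hp
      have h1 := hzpos p hp
      have h2 : 0 ≤ x p := hxC.1 p
      positivity
    have hε2 : ε ≤ 1/2 := min_le_left _ _
    have hεx : ∀ p, ε * x p ≤ z p := by
      intro p
      by_cases hp : p ∈ Q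
      · have h1 : ε ≤ z p / (x p + 1) := le_trans (min_le_right _ _) (Finset.inf'_le _ hp)
        have h2 : 0 ≤ x p := hxC.1 p
        have h3 : 0 < x p + 1 := by linarith
        have h4 : ε * (x p + 1) ≤ z p := by
          rw [← le_div_iff₀ h3]; exact h1
        nlinarith
      · rw [hxQ p hp]
        have : 0 ≤ z p := by
          have := hynn p
          have hzp : z p = (1/2) * y p := rfl
          rw [hzp]; linarith
        linarith
    set w : α → ℝ := (1 - ε)⁻¹ • (z - ε • x) with hw
    have h1ε : (0:ℝ) < 1 - ε := by linarith
    have hwC : w ∈ chainPolytope α := by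
      constructor
      · intro p
        have hwp : w p = (1 - ε)⁻¹ * (z p - ε * x p) := rfl
        rw [hwp]
        have := hεx p
        have h2 : 0 ≤ (1 - ε)⁻¹ := by positivity
        nlinarith
      · intro s hs
        have hyc := (hF.1 hyF).2 s hs
        have hxs : 0 ≤ ∑ p ∈ s, x p := Finset.sum_nonneg fun p _ => hxC.1 p
        have hsz : ∑ p ∈ s, z p = (1/2) * ∑ p ∈ s, y p := by
          rw [Finset.mul_sum]; rfl
        have hsw : ∑ p ∈ s, w p = (1 - ε)⁻¹ * (∑ p ∈ s, z p - ε * ∑ p ∈ s, x p) := by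
          have hterm : ∀ p ∈ s, w p = (1 - ε)⁻¹ * z p - (1 - ε)⁻¹ * (ε * x p) := by
            intro p _
            have hwp : w p = (1 - ε)⁻¹ * (z p - ε * x p) := rfl
            rw [hwp]; ring
          rw [Finset.sum_congr rfl hterm, Finset.sum_sub_distrib, ← Finset.mul_sum,
            ← Finset.mul_sum, ← Finset.mul_sum]
          ring
        rw [hsw, hsz]
        rw [inv_mul_le_iff₀ h1ε]
        nlinarith
    have hseg : z ∈ openSegment ℝ x w := by
      refine ⟨ε, 1 - ε, hε0, h1ε, by ring, ?_⟩
      funext p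
      have hwp : w p = (1 - ε)⁻¹ * (z p - ε * x p) := rfl
      have : (ε • x + (1 - ε) • w) p = ε * x p + (1 - ε) * w p := rfl
      rw [this, hwp]
      field_simp
      ring
    exact hF.2 hxC hwC hzF hseg

/-- vanishing off `Q` bounds the dimension. -/
lemma finrank_vectorSpan_le_card {F : Set (α → ℝ)} (Q : Finset α)
    (hF : ∀ x ∈ F, ∀ p, p ∉ Q → x p = 0) :
    Module.finrank ℝ (vectorSpan ℝ F) ≤ Q.card := by
  classical
  set W : Submodule ℝ (α → ℝ) :=
    { carrier := {x | ∀ p, p ∉ Q → x p = 0}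
      add_mem' := by
        intro a b ha hb p hp
        have : (a + b) p = a p + b p := rfl
        rw [this, ha p hp, hb p hp]; ring
      zero_mem' := fun p _ => rfl
      smul_mem' := by
        intro c a ha p hp
        have : (c • a) p = c * a p := rfl
        rw [this, ha p hp]; ring } with hW
  have hle : vectorSpan ℝ F ≤ W := by
    rw [vectorSpan]
    apply Submodule.span_le.2
    rintro v hv
    rw [Set.mem_vsub] at hv
    obtain ⟨x, hx, y, hy, rfl⟩ := hv
    intro p hp
    have : (x -ᵥ y) p = x p - y p := rfl
    rw [this, hF x hx p hp, hF y hy p hp]; ring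
  have h1 : Module.finrank ℝ (vectorSpan ℝ F) ≤ Module.finrank ℝ W :=
    Submodule.finrank_mono hle
  have h2 : Module.finrank ℝ W ≤ Q.card := by
    set f : W →ₗ[ℝ] ({q // q ∈ Q} → ℝ) :=
      { toFun := fun x q => (x : α → ℝ) q
        map_add' := fun a b => rfl
        map_smul' := fun c a => rfl } with hf
    have hinj : Function.Injective f := by
      intro a b hab
      apply Subtype.ext
      funext p
      by_cases hp : p ∈ Q
      · exact congrFun hab ⟨p, hp⟩
      · rw [a.2 p hp, b.2 p hp]
    calc Module.finrank ℝ W ≤ Module.finrank ℝ ({q // q ∈ Q} → ℝ) :=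
          LinearMap.finrank_le_finrank_of_injective hinj
      _ = Q.card := by rw [Module.finrank_pi, Fintype.card_coe]
  exact le_trans h1 h2

lemma chiSingle_ne_zero (r : α) : chi ({r} : Set α) ≠ 0 := by
  intro h
  have := congrFun h r
  simp [chi] at this

lemma chiSingle_inj : Function.Injective (fun r : α => chi ({r} : Set α)) := by
  intro r r' h
  have := congrFun h r
  simp only [chi] at this
  by_contra hne
  rw [if_pos (Set.mem_singleton r), if_neg (by simp [hne])] at this
  norm_num at this

/-- C-side classification. -/
lemma c_side {k : ℕ} {F : Set (α → ℝ)} (hface : IsFaceOf F (chainPolytope α))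
    (hsimp : IsSimplex F) (hdim : polyDim F = (k : ℤ)) (h0 : (0 : α → ℝ) ∈ F) :
    IsChain (· ≤ ·) ((suppSet F : Set α)) ∧ (suppSet F).card = k ∧
      F = {x ∈ chainPolytope α | ∀ p, p ∉ suppSet F → x p = 0} := by
  classical
  have hconv : Convex ℝ F := by
    obtain ⟨S, hS⟩ := hsimp.1
    rw [hS]; exact convex_convexHull _ _
  have hsupp := eq_suppFace hface hconv h0
  set Q := suppSet F with hQ
  have hne : F ≠ ∅ := by
    intro h; rw [h] at h0; exact h0
  have hdim' : Module.finrank ℝ (vectorSpan ℝ F) = k := by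
    rw [polyDim, if_neg hne] at hdim
    exact_mod_cast hdim
  have hvc : vertexCount F = k + 1 := by
    have h2 := hsimp.2
    rw [hdim] at h2
    omega
  have hextfin : (F.extremePoints ℝ).Finite := by
    by_contra hinf
    have := Set.Infinite.ncard hinf
    rw [vertexCount] at hvc
    omega
  have hmem : ∀ x, x ∈ chainPolytope α → (∀ p, p ∉ Q → x p = 0) → x ∈ F := by
    intro x hx hp
    rw [hsupp]
    exact ⟨hx, hp⟩
  have hsub01 : ∀ x ∈ F, ∀ p, 0 ≤ x p ∧ x p ≤ 1 := by
    intro x hx p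
    exact ⟨(hface.1 hx).1 p, chainPolytope_coord_le_one (hface.1 hx) p⟩
  have hchiQ : ∀ r ∈ Q, chi ({r} : Set α) ∈ F := by
    intro r hr
    apply hmem
    · exact chi_mem_chainPolytope (by rintro a rfl b rfl _; rfl)
    · intro p hp
      have hpr : p ≠ r := by rintro rfl; exact hp hr
      simp [chi, hpr]
  set V0 : Finset (α → ℝ) := insert 0 (Q.image (fun r => chi ({r} : Set α))) with hV0
  have h0ni : (0 : α → ℝ) ∉ Q.image (fun r => chi ({r} : Set α)) := by
    intro h
    obtain ⟨r, _, hr⟩ := Finset.mem_image.1 h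
    exact chiSingle_ne_zero r hr
  have hV0card : V0.card = Q.card + 1 := by
    rw [hV0, Finset.card_insert_of_notMem h0ni, Finset.card_image_of_injective _ chiSingle_inj]
  have hV0sub : (V0 : Set (α → ℝ)) ⊆ F.extremePoints ℝ := by
    intro v hv
    simp only [hV0, Finset.coe_insert, Set.mem_insert_iff, Finset.coe_image] at hv
    rcases hv with rfl | ⟨r, hr, rfl⟩
    · exact mem_extremePoints_of_zeroOne hsub01 (fun p => Or.inl rfl) h0
    · exact mem_extremePoints_of_zeroOne hsub01 (chi_zeroOne _) (hchiQ r (Finset.mem_coe.1 hr))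
  have hcard1 : Q.card + 1 ≤ k + 1 := by
    have := Set.ncard_le_ncard hV0sub hextfin
    rw [Set.ncard_coe_finset, hV0card] at this
    rw [vertexCount] at hvc
    omega
  have hcard2 : k ≤ Q.card := by
    rw [← hdim']
    apply finrank_vectorSpan_le_card
    intro x hx p hp
    rw [hsupp] at hx
    exact hx.2 p hp
  have hchain : IsChain (· ≤ ·) (Q : Set α) := by
    intro p hp q hq hne'
    by_contra hc
    push_neg at hc
    obtain ⟨hc1, hc2⟩ := hc
    have hpq : chi ({p, q} : Set α) ∈ F := by
      apply hmem
      · apply chi_mem_chainPolytope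
        rintro a (rfl | ha) b (rfl | hb) hab
        · rfl
        · rw [Set.mem_singleton_iff] at hb; subst hb; exact absurd hab hc1
        · rw [Set.mem_singleton_iff] at ha; subst ha; exact absurd hab hc2
        · rw [Set.mem_singleton_iff] at ha hb; rw [ha, hb]
      · intro r hr
        have h1 : r ≠ p := by rintro rfl; exact hr (Finset.mem_coe.1 hp)
        have h2 : r ≠ q := by rintro rfl; exact hr (Finset.mem_coe.1 hq)
        simp [chi, h1, h2]
    have hpqext : chi ({p, q} : Set α) ∈ F.extremePoints ℝ :=
      mem_extremePoints_of_zeroOne hsub01 (chi_zeroOne _) hpq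
    have hpqni : chi ({p, q} : Set α) ∉ V0 := by
      rw [hV0, Finset.mem_insert]
      rintro (h | h)
      · have := congrFun h p
        simp [chi] at this
      · obtain ⟨r, _, hr⟩ := Finset.mem_image.1 h
        have h1 : chi ({r} : Set α) p = chi ({p, q} : Set α) p := congrFun hr p
        have h2 : chi ({r} : Set α) q = chi ({p, q} : Set α) q := congrFun hr q
        have hcp : chi ({p, q} : Set α) p = 1 := by simp [chi]
        have hcq : chi ({p, q} : Set α) q = 1 := by simp [chi]
        rw [hcp] at h1
        rw [hcq] at h2
        have hpr : p = r := by
          by_contra hne''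
          rw [chi, if_neg (by simp [hne''])] at h1
          norm_num at h1
        have hqr : q = r := by
          by_contra hne''
          rw [chi, if_neg (by simp [hne''])] at h2
          norm_num at h2
        exact hne' (hpr.trans hqr.symm)
    have hsubV1 : ((insert (chi ({p, q} : Set α)) V0 : Finset (α → ℝ)) : Set (α → ℝ))
        ⊆ F.extremePoints ℝ := by
      intro v hv
      rw [Finset.coe_insert, Set.mem_insert_iff] at hv
      rcases hv with rfl | hv
      · exact hpqext
      · exact hV0sub hv
    have := Set.ncard_le_ncard hsubV1 hextfin
    rw [Set.ncard_coe_finset, Finset.card_insert_of_notMem hpqni, hV0card] at this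
    rw [vertexCount] at hvc
    omega
  exact ⟨hchain, by omega, hsupp⟩

/-! ### The order-polytope side -/

/-- Characteristic vector of the principal filter of `q`. -/
noncomputable def upChi (q : α) : α → ℝ := chi {r | q ≤ r}

lemma upChi_apply_of_le {q p : α} (h : q ≤ p) : upChi q p = 1 := by
  simp [upChi, chi, h]

lemma upChi_apply_of_not_le {q p : α} (h : ¬ q ≤ p) : upChi q p = 0 := by
  simp [upChi, chi, h]

lemma upChi_injective : Function.Injective (upChi (α := α)) := by
  intro q q' h
  have h1 := congrFun h q'
  have h2 := congrFun h q
  have hq : q ≤ q' := by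
    by_contra hc
    rw [upChi_apply_of_not_le hc, upChi_apply_of_le (le_refl q')] at h1
    norm_num at h1
  have hq' : q' ≤ q := by
    by_contra hc
    rw [upChi_apply_of_le (le_refl q), upChi_apply_of_not_le hc] at h2
    norm_num at h2
  exact le_antisymm hq hq'

/-- The face of the order polytope associated to a chain `Q`. -/
def ordFace (Q : Finset α) : Set (α → ℝ) :=
  {x ∈ orderPolytope α | ∀ p : α,
    ((∀ q ∈ Q, ¬ q ≤ p) → x p = 0) ∧
    (∀ q ∈ Q, q ≤ p → (∀ q' ∈ Q, q' ≤ p → q' ≤ q) → x p = x q)}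

open Classical in
/-- Vertex set of `ordFace Q`. -/
noncomputable def vertFin (Q : Finset α) : Finset (α → ℝ) := insert 0 (Q.image upChi)

lemma zero_mem_ordFace (Q : Finset α) : (0 : α → ℝ) ∈ ordFace Q :=
  ⟨zero_mem_orderPolytope, fun _ => ⟨fun _ => rfl, fun _ _ _ _ => rfl⟩⟩

lemma ordFace_subset (Q : Finset α) : ordFace Q ⊆ orderPolytope α := fun _ h => h.1

lemma isExtreme_ordFace (Q : Finset α) : IsExtreme ℝ (orderPolytope α) (ordFace Q) := by
  constructor
  · exact ordFace_subset Q
  · rintro x hx y hy z ⟨hzO, hz⟩ ⟨a, b, ha, hb, hab, habz⟩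
    have hx' : ∀ p, (a • x + b • y) p = a * x p + b * y p := fun p => rfl
    have key : ∀ p, (((∀ q ∈ Q, ¬ q ≤ p) → x p = 0) ∧
        (∀ q ∈ Q, q ≤ p → (∀ q' ∈ Q, q' ≤ p → q' ≤ q) → x p = x q)) ∧
        (((∀ q ∈ Q, ¬ q ≤ p) → y p = 0) ∧
        (∀ q ∈ Q, q ≤ p → (∀ q' ∈ Q, q' ≤ p → q' ≤ q) → y p = y q)) := by
      intro p
      constructor
      · constructor
        · intro hq
          have hz0 : z p = 0 := (hz p).1 hq
          have : a * x p + b * y p = 0 := by rw [← hx' p, habz, hz0]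
          have h1 := (hx.1 p).1; have h2 := (hy.1 p).1
          nlinarith
        · intro q hq hqp hmax
          have hzq : z p = z q := (hz p).2 q hq hqp hmax
          have he : a * x p + b * y p = a * x q + b * y q := by
            rw [← hx' p, ← hx' q, habz, hzq]
          have h1 := hx.2 q p hqp; have h2 := hy.2 q p hqp
          nlinarith
      · constructor
        · intro hq
          have hz0 : z p = 0 := (hz p).1 hq
          have : a * x p + b * y p = 0 := by rw [← hx' p, habz, hz0]
          have h1 := (hx.1 p).1; have h2 := (hy.1 p).1
          nlinarith
        · intro q hq hqp hmax
          have hzq : z p = z q := (hz p).2 q hq hqp hmax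
          have he : a * x p + b * y p = a * x q + b * y q := by
            rw [← hx' p, ← hx' q, habz, hzq]
          have h1 := hx.2 q p hqp; have h2 := hy.2 q p hqp
          nlinarith
    exact ⟨hx, fun p => (key p).1⟩

lemma convex_ordFace (Q : Finset α) : Convex ℝ (ordFace Q) := by
  rintro x ⟨hxO, hx⟩ y ⟨hyO, hy⟩ a b ha hb hab
  refine ⟨orderPolytope_convex hxO hyO ha hb hab, fun p => ?_⟩
  have hx' : ∀ r, (a • x + b • y) r = a * x r + b * y r := fun r => rfl
  constructor
  · intro hq
    rw [hx' p, (hx p).1 hq, (hy p).1 hq]; ring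
  · intro q hq hqp hmax
    rw [hx' p, hx' q, (hx p).2 q hq hqp hmax, (hy p).2 q hq hqp hmax]

lemma upChi_mem_ordFace {Q : Finset α} {q : α} (hq : q ∈ Q) : upChi q ∈ ordFace Q := by
  classical
  refine ⟨⟨fun p => ?_, fun p r hpr => ?_⟩, fun p => ⟨fun hnone => ?_, ?_⟩⟩
  · by_cases h : q ≤ p
    · rw [upChi_apply_of_le h]; norm_num
    · rw [upChi_apply_of_not_le h]; norm_num
  · by_cases h : q ≤ p
    · rw [upChi_apply_of_le h, upChi_apply_of_le (le_trans h hpr)]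
    · rw [upChi_apply_of_not_le h]
      by_cases h' : q ≤ r
      · rw [upChi_apply_of_le h']; norm_num
      · rw [upChi_apply_of_not_le h']
  · exact upChi_apply_of_not_le (hnone q hq)
  · intro q' hq' hq'p hmax
    by_cases h : q ≤ p
    · rw [upChi_apply_of_le h, upChi_apply_of_le (hmax q hq h)]
    · rw [upChi_apply_of_not_le h, upChi_apply_of_not_le (fun hc => h (le_trans hc hq'p))]

lemma vertFin_subset_ordFace (Q : Finset α) : (vertFin Q : Set (α → ℝ)) ⊆ ordFace Q := by
  classical
  intro v hv
  simp only [vertFin, Finset.coe_insert, Set.mem_insert_iff, Finset.coe_image,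
    Set.mem_image, Finset.mem_coe] at hv
  rcases hv with rfl | ⟨q, hq, rfl⟩
  · exact zero_mem_ordFace Q
  · exact upChi_mem_ordFace hq

/-- Representation of points of `ordFace Q` as combinations. -/
lemma ordFace_rep {Q : Finset α} (hchain : IsChain (· ≤ ·) (Q : Set α))
    {x : α → ℝ} (hx : x ∈ ordFace Q) :
    ∃ c : α → ℝ, (∀ q ∈ Q, 0 ≤ c q) ∧ (∑ q ∈ Q, c q) ≤ 1 ∧
      x = ∑ q ∈ Q, c q • upChi q := by
  classical
  obtain ⟨hxO, hcond⟩ := hx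
  set M : Finset α → ℝ := fun S => (insert (0:ℝ) (S.image x)).max' (Finset.insert_nonempty _ _)
    with hM
  have hM0 : M ∅ = 0 := by simp [hM]
  have hMeq : ∀ (S : Finset α) (m : α), m ∈ S → (∀ s ∈ S, x s ≤ x m) → 0 ≤ x m → M S = x m := by
    intro S m hm hb h0
    apply le_antisymm
    · apply Finset.max'_le
      intro y hy
      rcases Finset.mem_insert.1 hy with rfl | hy'
      · exact h0
      · obtain ⟨s, hs, rfl⟩ := Finset.mem_image.1 hy'
        exact hb s hs
    · exact Finset.le_max' _ _ (Finset.mem_insert_of_mem (Finset.mem_image_of_mem x hm))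
  have hMle : ∀ q ∈ Q, M (Q.filter (· < q)) ≤ x q := by
    intro q hq
    apply Finset.max'_le
    intro y hy
    rcases Finset.mem_insert.1 hy with rfl | hy'
    · exact (hxO.1 q).1
    · obtain ⟨s, hs, rfl⟩ := Finset.mem_image.1 hy'
      exact hxO.2 s q (le_of_lt (Finset.mem_filter.1 hs).2)
  set c : α → ℝ := fun q => x q - M (Q.filter (· < q)) with hc
  have hcnn : ∀ q ∈ Q, 0 ≤ c q := by
    intro q hq
    have := hMle q hq
    simp only [hc]; linarith
  -- telescoping
  have htel : ∀ n (m : α), m ∈ Q → (Q.filter (fun q => q ≤ m)).card ≤ n →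
      ∑ q ∈ Q.filter (fun q => q ≤ m), c q = x m := by
    intro n
    induction n with
    | zero =>
      intro m hm hcard
      exfalso
      have : m ∈ Q.filter (fun q => q ≤ m) := Finset.mem_filter.2 ⟨hm, le_refl m⟩
      have := Finset.card_pos.2 ⟨m, this⟩
      omega
    | succ n ih =>
      intro m hm hcard
      set S' : Finset α := Q.filter (fun q => q < m) with hS'
      have hsplit : Q.filter (fun q => q ≤ m) = insert m S' := by
        ext q
        simp only [Finset.mem_filter, Finset.mem_insert, hS']
        constructor
        · rintro ⟨hqQ, hqm⟩
          rcases lt_or_eq_of_le hqm with h | h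
          · exact Or.inr ⟨hqQ, h⟩
          · exact Or.inl h
        · rintro (rfl | ⟨hqQ, hqm⟩)
          · exact ⟨hm, le_refl _⟩
          · exact ⟨hqQ, le_of_lt hqm⟩
      have hmnot : m ∉ S' := by
        simp [hS']
      rw [hsplit, Finset.sum_insert hmnot]
      rcases S'.eq_empty_or_nonempty with hSe | hSne
      · rw [hSe]
        simp only [Finset.sum_empty, add_zero, hc]
        rw [← hS', hSe, hM0]
        ring
      · obtain ⟨m', hm'S, hm'max0⟩ := Finset.exists_maximal hSne
        have hm'max : ∀ x ∈ S', ¬ m' < x :=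
          fun x hx hlt => lt_irrefl _ (lt_of_lt_of_le hlt (hm'max0 hx hlt.le))
        have hm'Q : m' ∈ Q := (Finset.mem_filter.1 hm'S).1
        have hm'm : m' < m := (Finset.mem_filter.1 hm'S).2
        have hallle : ∀ s ∈ S', s ≤ m' := by
          intro s hs
          have hsQ : s ∈ Q := (Finset.mem_filter.1 hs).1
          rcases eq_or_ne s m' with rfl | hne
          · exact le_refl _
          · rcases hchain.total (Finset.mem_coe.2 hsQ) (Finset.mem_coe.2 hm'Q) with h | h
            · exact h
            · exact absurd (lt_of_le_of_ne h (Ne.symm hne)) (hm'max s hs)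
        have hMS' : M S' = x m' := by
          apply hMeq S' m' hm'S
          · intro s hs; exact hxO.2 s m' (hallle s hs)
          · exact (hxO.1 m').1
        have hfilter' : Q.filter (fun q => q ≤ m') = S' := by
          ext q
          simp only [Finset.mem_filter, hS']
          constructor
          · rintro ⟨hqQ, hqm'⟩
            exact ⟨hqQ, lt_of_le_of_lt hqm' hm'm⟩
          · rintro ⟨hqQ, hqm⟩
            exact ⟨hqQ, hallle q (Finset.mem_filter.2 ⟨hqQ, hqm⟩)⟩
        have hcards : S'.card ≤ n := by
          have h1 : (Q.filter (fun q => q ≤ m)).card = S'.card + 1 := by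
            rw [hsplit, Finset.card_insert_of_notMem hmnot]
          omega
        have hIH : ∑ q ∈ S', c q = x m' := by
          rw [← hfilter']
          exact ih m' hm'Q (by rw [hfilter']; exact hcards)
        rw [hIH]
        simp only [hc, ← hS', hMS']
        ring
  have heval : ∀ p, ∑ q ∈ Q.filter (fun q => q ≤ p), c q = x p := by
    intro p
    rcases (Q.filter (fun q => q ≤ p)).eq_empty_or_nonempty with he | hne
    · rw [he, Finset.sum_empty]
      symm
      apply (hcond p).1
      intro q hq hqp
      have : q ∈ Q.filter (fun q => q ≤ p) := Finset.mem_filter.2 ⟨hq, hqp⟩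
      rw [he] at this
      exact absurd this (Finset.notMem_empty q)
    · obtain ⟨m, hmS, hmmax0⟩ := Finset.exists_maximal hne
      have hmmax : ∀ x ∈ Q.filter (fun q => q ≤ p), ¬ m < x :=
        fun x hx hlt => lt_irrefl _ (lt_of_lt_of_le hlt (hmmax0 hx hlt.le))
      have hmQ : m ∈ Q := (Finset.mem_filter.1 hmS).1
      have hmp : m ≤ p := (Finset.mem_filter.1 hmS).2
      have hallle : ∀ q ∈ Q, q ≤ p → q ≤ m := by
        intro q hq hqp
        have hqS : q ∈ Q.filter (fun q => q ≤ p) := Finset.mem_filter.2 ⟨hq, hqp⟩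
        rcases eq_or_ne q m with rfl | hne'
        · exact le_refl _
        · rcases hchain.total (Finset.mem_coe.2 hq) (Finset.mem_coe.2 hmQ) with h | h
          · exact h
          · exact absurd (lt_of_le_of_ne h (Ne.symm hne')) (hmmax q hqS)
      have hfe : Q.filter (fun q => q ≤ p) = Q.filter (fun q => q ≤ m) := by
        ext q
        simp only [Finset.mem_filter]
        exact ⟨fun ⟨h1, h2⟩ => ⟨h1, hallle q h1 h2⟩, fun ⟨h1, h2⟩ => ⟨h1, le_trans h2 hmp⟩⟩
      rw [hfe, htel (Q.filter (fun q => q ≤ m)).card m hmQ (le_refl _)]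
      exact ((hcond p).2 m hmQ hmp (hallle)).symm
  refine ⟨c, hcnn, ?_, ?_⟩
  · rcases Q.eq_empty_or_nonempty with he | hne
    · rw [he]; simp
    · obtain ⟨m, hmQ, hmmax0⟩ := Finset.exists_maximal hne
      have hmmax : ∀ x ∈ Q, ¬ m < x :=
        fun x hx hlt => lt_irrefl _ (lt_of_lt_of_le hlt (hmmax0 hx hlt.le))
      have : Q.filter (fun q => q ≤ m) = Q := by
        ext q
        simp only [Finset.mem_filter, and_iff_left_iff_imp]
        intro hq
        rcases eq_or_ne q m with rfl | hne'
        · exact le_refl _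
        · rcases hchain.total (Finset.mem_coe.2 hq) (Finset.mem_coe.2 hmQ) with h | h
          · exact h
          · exact absurd (lt_of_le_of_ne h (Ne.symm hne')) (hmmax q hq)
      have h1 := heval m
      rw [this] at h1
      rw [h1]
      exact (hxO.1 m).2
  · funext p
    have hrhs : (∑ q ∈ Q, c q • upChi q) p = ∑ q ∈ Q, c q * upChi q p := by
      rw [Finset.sum_apply]; rfl
    have hterm : ∀ q ∈ Q, c q * upChi q p = if q ≤ p then c q else 0 := by
      intro q _
      by_cases h : q ≤ p
      · rw [upChi_apply_of_le h, if_pos h]; ring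
      · rw [upChi_apply_of_not_le h, if_neg h]; ring
    rw [hrhs, Finset.sum_congr rfl hterm, ← Finset.sum_filter, heval p]

lemma ordFace_eq_convexHull {Q : Finset α} (hchain : IsChain (· ≤ ·) (Q : Set α)) :
    ordFace Q = convexHull ℝ (vertFin Q : Set (α → ℝ)) := by
  classical
  apply Subset.antisymm
  · intro x hx
    obtain ⟨c, hcnn, hcsum, hrep⟩ := ordFace_rep hchain hx
    set t : Finset (Option α) := insert none (Q.map ⟨some, Option.some_injective α⟩) with ht
    set w : Option α → ℝ := fun o => o.elim (1 - ∑ q ∈ Q, c q) c with hwdef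
    set z : Option α → (α → ℝ) := fun o => o.elim 0 upChi with hzdef
    have hnone : none ∉ Q.map ⟨some, Option.some_injective α⟩ := by simp
    have hsumw : ∑ i ∈ t, w i = 1 := by
      rw [ht, Finset.sum_insert hnone, Finset.sum_map]
      simp only [hwdef, Function.Embedding.coeFn_mk, Option.elim]
      ring
    have hw0 : ∀ i ∈ t, 0 ≤ w i := by
      intro i hi
      rw [ht, Finset.mem_insert] at hi
      rcases hi with rfl | hi
      · simp only [hwdef, Option.elim]; linarith
      · obtain ⟨q, hq, rfl⟩ := Finset.mem_map.1 hi
        exact hcnn q hq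
    have hz : ∀ i ∈ t, z i ∈ (vertFin Q : Set (α → ℝ)) := by
      intro i hi
      rw [ht, Finset.mem_insert] at hi
      rcases hi with rfl | hi
      · simp [hzdef, vertFin]
      · obtain ⟨q, hq, rfl⟩ := Finset.mem_map.1 hi
        simp only [hzdef, Option.elim, Function.Embedding.coeFn_mk]
        simp only [vertFin, Finset.coe_insert, Set.mem_insert_iff, Finset.coe_image]
        exact Or.inr (Set.mem_image_of_mem _ (Finset.mem_coe.2 hq))
    have hmem := t.centerMass_mem_convexHull hw0 (by rw [hsumw]; norm_num) hz
    have hcm : t.centerMass w z = x := by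
      rw [Finset.centerMass_eq_of_sum_1 _ _ hsumw]
      rw [ht, Finset.sum_insert hnone, Finset.sum_map]
      simp only [hwdef, hzdef, Option.elim, Function.Embedding.coeFn_mk, smul_zero, zero_add]
      exact hrep.symm
    rwa [hcm] at hmem
  · exact convexHull_min (vertFin_subset_ordFace Q) (convex_ordFace Q)

lemma extremePoints_ordFace {Q : Finset α} (hchain : IsChain (· ≤ ·) (Q : Set α)) :
    (ordFace Q).extremePoints ℝ = (vertFin Q : Set (α → ℝ)) := by
  apply Subset.antisymm
  · rw [ordFace_eq_convexHull hchain]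
    exact extremePoints_convexHull_subset
  · intro v hv
    apply mem_extremePoints_of_zeroOne
    · intro y hy p
      exact (hy.1.1 p)
    · classical
      simp only [vertFin, Finset.coe_insert, Set.mem_insert_iff, Finset.coe_image] at hv
      rcases hv with rfl | ⟨q, hq, rfl⟩
      · intro p; exact Or.inl rfl
      · exact chi_zeroOne _
    · exact vertFin_subset_ordFace Q hv

lemma vertFin_card (Q : Finset α) : (vertFin Q).card = Q.card + 1 := by
  classical
  rw [vertFin, Finset.card_insert_of_notMem, Finset.card_image_of_injective _ upChi_injective]
  intro h
  obtain ⟨q, hq, hq0⟩ := Finset.mem_image.1 h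
  have := congrFun hq0 q
  rw [upChi_apply_of_le (le_refl q)] at this
  norm_num at this

lemma upChi_linearIndependent {Q : Finset α} (hchain : IsChain (· ≤ ·) (Q : Set α)) :
    LinearIndependent ℝ (fun q : {x // x ∈ Q} => upChi (q : α)) := by
  classical
  rw [linearIndependent_iff']
  suffices H : ∀ (n : ℕ) (s : Finset {x // x ∈ Q}) (g : {x // x ∈ Q} → ℝ)
      (i : {x // x ∈ Q}), i ∈ s → ∑ i' ∈ s, g i' • upChi (i' : α) = 0 → s.card = n →
      g i = 0 by
    intro s g hsum i hi
    exact H s.card s g i hi hsum rfl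
  intro n
  induction n using Nat.strong_induction_on with
  | _ n ih =>
    intro s g i hi hsum hn
    subst hn
    obtain ⟨j, hjs, hjmin0⟩ := Finset.exists_minimal (s := s) ⟨i, hi⟩
    have hjmin : ∀ x ∈ s, ¬ x < j :=
      fun x hx hlt => lt_irrefl _ (lt_of_lt_of_le hlt (hjmin0 hx hlt.le))
    have hje : ∀ i' ∈ s, i' ≠ j → ¬ ((i' : α) ≤ (j : α)) := by
      intro i' hi' hne hc
      rcases lt_or_eq_of_le hc with h | h
      · exact hjmin i' hi' (by exact_mod_cast h)
      · exact hne (Subtype.ext h)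
    have hgj : g j = 0 := by
      have := congrFun hsum (j : α)
      have hzero : (0 : α → ℝ) (j : α) = 0 := rfl
      rw [Finset.sum_apply] at this
      have hterm : ∀ i' ∈ s, (g i' • upChi (i' : α)) (j : α) =
          if i' = j then g i' else 0 := by
        intro i' hi'
        have : (g i' • upChi (i' : α)) (j : α) = g i' * upChi (i' : α) (j : α) := rfl
        rw [this]
        by_cases h : i' = j
        · subst h
          rw [upChi_apply_of_le (le_refl _), if_pos rfl]; ring
        · rw [upChi_apply_of_not_le (hje i' hi' h), if_neg h]; ring
      rw [Finset.sum_congr rfl hterm, Finset.sum_ite_eq' s j g, if_pos hjs] at this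
      rw [this]; rfl
    rcases eq_or_ne i j with rfl | hij
    · exact hgj
    · have hsum' : ∑ i' ∈ s.erase j, g i' • upChi (i' : α) = 0 := by
        have h2 := Finset.sum_erase_add s (fun i' => g i' • upChi (i' : α)) hjs
        simp only [hgj, zero_smul, add_zero, hsum] at h2
        exact h2
      have hcard : (s.erase j).card < s.card := by
        rw [Finset.card_erase_of_mem hjs]
        have := Finset.card_pos.2 ⟨j, hjs⟩
        omega
      exact ih (s.erase j).card hcard (s.erase j) g i
        (Finset.mem_erase.2 ⟨hij, hi⟩) hsum' rfl

lemma finrank_vectorSpan_ordFace {Q : Finset α} (hchain : IsChain (· ≤ ·) (Q : Set α)) :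
    Module.finrank ℝ (vectorSpan ℝ (ordFace Q)) = Q.card := by
  classical
  apply le_antisymm
  · -- upper bound: everything lies in the span of the upChi's
    have hsub : ∀ x ∈ ordFace Q, x ∈ Submodule.span ℝ (upChi '' (Q : Set α)) := by
      intro x hx
      obtain ⟨c, _, _, hrep⟩ := ordFace_rep hchain hx
      rw [hrep]
      apply Submodule.sum_mem
      intro q hq
      exact Submodule.smul_mem _ _ (Submodule.subset_span
        (Set.mem_image_of_mem _ (Finset.mem_coe.2 hq)))
    have hle : vectorSpan ℝ (ordFace Q) ≤ Submodule.span ℝ (upChi '' (Q : Set α)) := by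
      rw [vectorSpan]
      apply Submodule.span_le.2
      rintro v hv
      rw [Set.mem_vsub] at hv
      obtain ⟨x, hx, y, hy, rfl⟩ := hv
      have : x -ᵥ y = x - y := rfl
      rw [this]
      exact sub_mem (hsub x hx) (hsub y hy)
    have h2 : Module.finrank ℝ (Submodule.span ℝ (upChi '' (Q : Set α))) ≤ Q.card := by
      have : upChi '' (Q : Set α) = ((Q.image upChi : Finset (α → ℝ)) : Set (α → ℝ)) := by
        rw [Finset.coe_image]
      rw [this]
      calc Module.finrank ℝ (Submodule.span ℝ ((Q.image upChi : Finset (α → ℝ)) : Set (α → ℝ)))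
          ≤ (Q.image upChi).card := finrank_span_finset_le_card _
        _ ≤ Q.card := Finset.card_image_le
    exact le_trans (Submodule.finrank_mono hle) h2
  · -- lower bound via linear independence
    have hind := upChi_linearIndependent hchain
    have hle : Submodule.span ℝ (Set.range (fun q : {x // x ∈ Q} => upChi (q : α)))
        ≤ vectorSpan ℝ (ordFace Q) := by
      apply Submodule.span_le.2
      rintro v ⟨q, rfl⟩
      have h1 : upChi (q : α) ∈ ordFace Q := upChi_mem_ordFace q.2
      have h2 : (0 : α → ℝ) ∈ ordFace Q := zero_mem_ordFace Q
      have := vsub_mem_vectorSpan ℝ h1 h2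
      have he : upChi (q : α) -ᵥ (0 : α → ℝ) = upChi (q : α) := by
        rw [vsub_eq_sub, sub_zero]
      rwa [he] at this
    calc Q.card = Fintype.card {x // x ∈ Q} := (Fintype.card_coe Q).symm
      _ = Module.finrank ℝ (Submodule.span ℝ
            (Set.range (fun q : {x // x ∈ Q} => upChi (q : α)))) :=
          (finrank_span_eq_card hind).symm
      _ ≤ Module.finrank ℝ (vectorSpan ℝ (ordFace Q)) := Submodule.finrank_mono hle

lemma polyDim_ordFace {Q : Finset α} (hchain : IsChain (· ≤ ·) (Q : Set α)) :
    polyDim (ordFace Q) = (Q.card : ℤ) := by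
  have hne : ordFace Q ≠ ∅ := by
    intro h
    have := zero_mem_ordFace Q
    rw [h] at this
    exact this
  rw [polyDim, if_neg hne, finrank_vectorSpan_ordFace hchain]

lemma isSimplex_ordFace {Q : Finset α} (hchain : IsChain (· ≤ ·) (Q : Set α)) :
    IsSimplex (ordFace Q) := by
  constructor
  · exact ⟨vertFin Q, ordFace_eq_convexHull hchain⟩
  · rw [polyDim_ordFace hchain]
    have : vertexCount (ordFace Q) = Q.card + 1 := by
      rw [vertexCount, extremePoints_ordFace hchain, Set.ncard_coe_finset, vertFin_card]
    rw [this]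
    push_cast
    ring

lemma ordFace_inj {Q Q' : Finset α} (hchain : IsChain (· ≤ ·) (Q : Set α))
    (hchain' : IsChain (· ≤ ·) (Q' : Set α)) (h : ordFace Q = ordFace Q') : Q = Q' := by
  classical
  have hv : (vertFin Q : Set (α → ℝ)) = (vertFin Q' : Set (α → ℝ)) := by
    rw [← extremePoints_ordFace hchain, ← extremePoints_ordFace hchain', h]
  have key : ∀ (A B : Finset α), (vertFin A : Set (α → ℝ)) = (vertFin B : Set (α → ℝ)) →
      ∀ q ∈ A, q ∈ B := by
    intro A B hAB q hq
    have h1 : upChi q ∈ (vertFin A : Set (α → ℝ)) := by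
      simp only [vertFin, Finset.coe_insert, Set.mem_insert_iff, Finset.coe_image]
      exact Or.inr (Set.mem_image_of_mem _ (Finset.mem_coe.2 hq))
    rw [hAB] at h1
    simp only [vertFin, Finset.coe_insert, Set.mem_insert_iff, Finset.coe_image] at h1
    rcases h1 with h1 | ⟨q', hq', he⟩
    · exfalso
      have := congrFun h1 q
      rw [upChi_apply_of_le (le_refl q)] at this
      norm_num at this
    · rw [← upChi_injective he]
      exact Finset.mem_coe.1 hq'
  ext q
  exact ⟨fun hq => key Q Q' hv q hq, fun hq => key Q' Q hv.symm q hq⟩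

/-! ### Finiteness of the target set -/

lemma extremePoints_orderPolytope_zeroOne :
    (orderPolytope α).extremePoints ℝ ⊆ {x | zeroOneVec x} := by
  classical
  rintro x ⟨hxO, hext⟩
  intro p
  by_contra hc
  push_neg at hc
  obtain ⟨h0, h1⟩ := hc
  have hxp0 : 0 < x p := lt_of_le_of_ne (hxO.1 p).1 (Ne.symm h0)
  have hxp1 : x p < 1 := lt_of_le_of_ne (hxO.1 p).2 h1
  set v : α → ℝ := fun r => if x r = x p then 1 else 0 with hv
  set A : Finset (α × α) := Finset.univ.filter (fun rs => x rs.1 < x rs.2) with hA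
  set ε₁ : ℝ := if hA0 : A.Nonempty then A.inf' hA0 (fun rs => x rs.2 - x rs.1) else 1 with hε₁
  have hε₁pos : 0 < ε₁ := by
    rw [hε₁]
    split
    · rename_i hA0
      rw [Finset.lt_inf'_iff]
      intro rs hrs
      have := (Finset.mem_filter.1 hrs).2
      linarith
    · norm_num
  have hε₁le : ∀ r s : α, x r < x s → ε₁ ≤ x s - x r := by
    intro r s hrs
    have hmem : (r, s) ∈ A := Finset.mem_filter.2 ⟨Finset.mem_univ _, hrs⟩
    rw [hε₁, dif_pos ⟨(r, s), hmem⟩]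
    exact Finset.inf'_le _ hmem
  set ε : ℝ := min (min (x p) (1 - x p)) ε₁ with hε
  have hεpos : 0 < ε := by
    apply lt_min (lt_min hxp0 (by linarith)) hε₁pos
  have hεxp : ε ≤ x p := le_trans (min_le_left _ _) (min_le_left _ _)
  have hεxp1 : ε ≤ 1 - x p := le_trans (min_le_left _ _) (min_le_right _ _)
  have hεε₁ : ε ≤ ε₁ := min_le_right _ _
  -- the two perturbed points
  have hmem : ∀ (s : ℝ), s = 1 ∨ s = -1 → x + (s * ε) • v ∈ orderPolytope α := by
    intro s hs
    constructor
    · intro r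
      have he : (x + (s * ε) • v) r = x r + s * ε * v r := rfl
      rw [he, hv]
      by_cases h : x r = x p
      · simp only [if_pos h]
        rcases hs with rfl | rfl
        · constructor
          · rw [h]; linarith
          · rw [h]; linarith
        · constructor
          · rw [h]; linarith
          · rw [h]; linarith
      · simp only [if_neg h]
        have := (hxO.1 r).1
        have := (hxO.1 r).2
        constructor <;> linarith
    · intro r t hrt
      have her : (x + (s * ε) • v) r = x r + s * ε * v r := rfl
      have het : (x + (s * ε) • v) t = x t + s * ε * v t := rfl
      rw [her, het, hv]
      have hmon := hxO.2 r t hrt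
      by_cases h1 : x r = x p <;> by_cases h2 : x t = x p
      · simp only [if_pos h1, if_pos h2]; linarith
      · simp only [if_pos h1, if_neg h2]
        have hlt : x r < x t := lt_of_le_of_ne hmon (fun hcx => h2 (by rw [← hcx]; exact h1))
        have := hε₁le r t hlt
        rcases hs with rfl | rfl <;> nlinarith
      · simp only [if_neg h1, if_pos h2]
        have hlt : x r < x t := lt_of_le_of_ne hmon (fun hcx => h1 (by rw [hcx]; exact h2))
        have := hε₁le r t hlt
        rcases hs with rfl | rfl <;> nlinarith
      · simp only [if_neg h1, if_neg h2]; linarith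
  have hplus : x + (1 * ε) • v ∈ orderPolytope α := hmem 1 (Or.inl rfl)
  have hminus : x + ((-1) * ε) • v ∈ orderPolytope α := hmem (-1) (Or.inr rfl)
  have hseg : x ∈ openSegment ℝ (x + (1 * ε) • v) (x + ((-1) * ε) • v) := by
    refine ⟨1/2, 1/2, by norm_num, by norm_num, by norm_num, ?_⟩
    funext r
    have heq : (((1:ℝ)/2) • (x + (1 * ε) • v) + ((1:ℝ)/2) • (x + ((-1) * ε) • v)) r
        = (1/2) * (x r + 1 * ε * v r) + (1/2) * (x r + (-1) * ε * v r) := rfl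
    rw [heq]; ring
  have := hext hplus hminus hseg
  have hcon := congrFun this p
  have heqp : (x + (1 * ε) • v) p = x p + ε * v p := by
    have h : (x + (1 * ε) • v) p = x p + 1 * ε * v p := rfl
    rw [h]; ring
  have hvp : v p = (1:ℝ) := by rw [hv]; simp
  rw [heqp, hvp] at hcon
  linarith

lemma cube_finite : {x : α → ℝ | zeroOneVec x}.Finite := by
  classical
  apply Set.Finite.subset (Set.finite_range (fun S : Finset α => chi (S : Set α)))
  intro x hx
  refine ⟨Finset.univ.filter (fun p => x p = 1), ?_⟩
  funext p
  by_cases h : x p = 1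
  · simp [chi, h]
  · have : x p = 0 := (hx p).resolve_right h
    simp [chi, h, this]

lemma polytope_eq_hull_extremePoints {F : Set (α → ℝ)} (h : IsPolytope F) :
    F = convexHull ℝ (F.extremePoints ℝ) := by
  obtain ⟨S, rfl⟩ := h
  have hcomp : IsCompact (convexHull ℝ (S : Set (α → ℝ))) :=
    S.finite_toSet.isCompact_convexHull (𝕜 := ℝ)
  have hconv : Convex ℝ (convexHull ℝ (S : Set (α → ℝ))) := convex_convexHull _ _
  have hKM := closure_convexHull_extremePoints hcomp hconv
  have hext : (convexHull ℝ (S : Set (α → ℝ))).extremePoints ℝ ⊆ (S : Set (α → ℝ)) :=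
    extremePoints_convexHull_subset
  have hfin : ((convexHull ℝ (S : Set (α → ℝ))).extremePoints ℝ).Finite :=
    S.finite_toSet.subset hext
  have hclosed : IsClosed (convexHull ℝ ((convexHull ℝ (S : Set (α → ℝ))).extremePoints ℝ)) :=
    hfin.isClosed_convexHull (𝕜 := ℝ)
  exact hKM.symm.trans hclosed.closure_eq

lemma order_faces_finite (k : ℕ) :
    {F : Set (α → ℝ) | IsFaceOf F (orderPolytope α) ∧ IsSimplex F ∧ polyDim F = (k : ℤ) ∧
      (0 : α → ℝ) ∈ F}.Finite := by
  apply Set.Finite.subset (Set.Finite.image (fun s => convexHull ℝ s)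
    (cube_finite (α := α)).finite_subsets)
  rintro F ⟨hface, hsimp, hdim, h0⟩
  refine ⟨F.extremePoints ℝ, ?_, (polytope_eq_hull_extremePoints hsimp.1).symm⟩
  intro x hx
  exact extremePoints_orderPolytope_zeroOne (hface.extremePoints_subset_extremePoints hx)

end Aux
/-- the chain polytope has at most as many `k`-dimensional simplex faces
containing the origin as the order polytope. -/
theorem chain_simpCount0_le_order_simpCount0 (α : Type*) [Fintype α] [PartialOrder α] (k : ℕ) :
    simpCount0 (chainPolytope α) (k : ℤ) ≤ simpCount0 (orderPolytope α) (k : ℤ) := by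
  classical
  unfold simpCount0
  refine Set.ncard_le_ncard_of_injOn (fun F => ordFace (suppSet F)) ?_ ?_ (order_faces_finite k)
  · rintro F ⟨hface, hsimp, hdim, h0⟩
    obtain ⟨hchain, hcard, hsupp⟩ := c_side hface hsimp hdim h0
    refine ⟨isExtreme_ordFace _, isSimplex_ordFace hchain, ?_, zero_mem_ordFace _⟩
    rw [polyDim_ordFace hchain, hcard]
  · rintro F ⟨hf1, hf2, hf3, hf4⟩ F' ⟨hg1, hg2, hg3, hg4⟩ heq
    obtain ⟨hc, _, hs⟩ := c_side hf1 hf2 hf3 hf4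
    obtain ⟨hc', _, hs'⟩ := c_side hg1 hg2 hg3 hg4
    have hqq : suppSet F = suppSet F' := ordFace_inj hc hc' heq
    rw [hs, hs', hqq]
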